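/- Let P, P̄ be reversible irreducible Markov chains on [d] with stationary distributions π, π̄, let Q̄ = diag(π̄)P̄ and R = diag(π̄)P, and let S ⊆ [d] with π̄(S) > 0. Then ρ(√(P∘P̄)) ≥ (1 - ε/2) Σ_{i,j∈S} √(R(i,j)/π̄(S)) √(Q̄(i,j)/π̄(S)), provided max_i |π(i)/π̄(i) - 1| ≤ ε/2. -/

import Mathlib

open Matrix BigOperators Finset

noncomputable def rho {n : Type*} [Fintype n] [DecidableEq n] (A : Matrix n n ℝ) : ℝ :=
  (spectralRadius ℂ (A.map (algebraMap ℝ ℂ))).toReal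

noncomputable def sqrtm {m n : Type*} (A : Matrix m n ℝ) : Matrix m n ℝ :=
  Matrix.of fun i j => Real.sqrt (A i j)

noncomputable def mcDist {n : Type*} [Fintype n] [DecidableEq n] (P Q : Matrix n n ℝ) : ℝ :=
  1 - rho (sqrtm (Matrix.hadamard P Q))

def IsStochastic {d : ℕ} (P : Matrix (Fin d) (Fin d) ℝ) : Prop :=
  (∀ i j, 0 ≤ P i j) ∧ ∀ i, ∑ j, P i j = 1

def IsIrreducibleMC {d : ℕ} (P : Matrix (Fin d) (Fin d) ℝ) : Prop :=
  ∀ i j, ∃ k, 0 < (P ^ k) i j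

def IsStationaryDist {d : ℕ} (P : Matrix (Fin d) (Fin d) ℝ) (π : Fin d → ℝ) : Prop :=
  (∀ i, 0 < π i) ∧ (∑ i, π i = 1) ∧ ∀ j, ∑ i, π i * P i j = π j

def IsReversible {d : ℕ} (P : Matrix (Fin d) (Fin d) ℝ) (π : Fin d → ℝ) : Prop :=
  ∀ i j, π i * P i j = π j * P j i

def subm {d : ℕ} (P : Matrix (Fin d) (Fin d) ℝ) (R T : Finset (Fin d)) :
    Matrix {x // x ∈ R} {x // x ∈ T} ℝ :=
  Matrix.of fun i j => P i.1 j.1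

noncomputable def censored {d : ℕ} (P : Matrix (Fin d) (Fin d) ℝ) (S : Finset (Fin d)) :
    Matrix {x // x ∈ S} {x // x ∈ S} ℝ :=
  subm P S S + ∑' t : ℕ, subm P S Sᶜ * (subm P Sᶜ Sᶜ) ^ (t + 1) * subm P Sᶜ S

lemma aux_mem_spectrum_complex {d : ℕ} {M : Matrix (Fin d) (Fin d) ℝ} {μ : ℝ}
    (h : μ ∈ spectrum ℝ M) : (μ : ℂ) ∈ spectrum ℂ (M.map (algebraMap ℝ ℂ)) := by
  rw [spectrum.mem_iff] at h ⊢
  intro hu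
  apply h
  have key : ((algebraMap ℝ (Matrix (Fin d) (Fin d) ℝ) μ - M).map (algebraMap ℝ ℂ))
      = algebraMap ℂ (Matrix (Fin d) (Fin d) ℂ) (μ : ℂ) - M.map (algebraMap ℝ ℂ) := by
    ext i j
    simp only [Matrix.map_apply, Matrix.sub_apply, Matrix.algebraMap_matrix_apply, map_sub]
    split_ifs <;> simp
  rw [Matrix.isUnit_iff_isUnit_det, isUnit_iff_ne_zero] at hu ⊢
  intro h0
  apply hu
  rw [← key, ← RingHom.mapMatrix_apply, ← RingHom.map_det, h0, map_zero]

lemma aux_mem_spectrum_of_conj {d : ℕ} {M C C' : Matrix (Fin d) (Fin d) ℝ} (hCC' : C * C' = 1)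
    {μ : ℝ} (h : μ ∈ spectrum ℝ (C * M * C')) : μ ∈ spectrum ℝ M := by
  rw [spectrum.mem_iff] at h ⊢
  intro hu
  apply h
  have hdet : C.det * C'.det = 1 := by rw [← Matrix.det_mul, hCC', Matrix.det_one]
  have key : algebraMap ℝ (Matrix (Fin d) (Fin d) ℝ) μ - C * M * C'
      = C * (algebraMap ℝ (Matrix (Fin d) (Fin d) ℝ) μ - M) * C' := by
    rw [mul_sub, sub_mul]
    congr 1
    rw [Algebra.algebraMap_eq_smul_one, mul_smul_comm, mul_one, smul_mul_assoc, hCC']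
  rw [Matrix.isUnit_iff_isUnit_det, isUnit_iff_ne_zero] at hu ⊢
  rw [key, Matrix.det_mul, Matrix.det_mul]
  exact mul_ne_zero (mul_ne_zero (left_ne_zero_of_mul_eq_one hdet) hu)
    (right_ne_zero_of_mul_eq_one hdet)

attribute [local instance] Matrix.linftyOpNormedRing Matrix.linftyOpNormedAlgebra

lemma aux_le_rho {d : ℕ} (hd : 0 < d) {M : Matrix (Fin d) (Fin d) ℝ} {μ : ℝ}
    (h : μ ∈ spectrum ℝ M) : μ ≤ rho M := by
  haveI : Nonempty (Fin d) := ⟨⟨0, hd⟩⟩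
  have h' : (μ : ℂ) ∈ spectrum ℂ (M.map (algebraMap ℝ ℂ)) := aux_mem_spectrum_complex h
  have h1 : (‖(μ : ℂ)‖₊ : ENNReal) ≤ spectralRadius ℂ (M.map (algebraMap ℝ ℂ)) :=
    le_iSup₂_of_le (μ : ℂ) h' le_rfl
  have h2 : spectralRadius ℂ (M.map (algebraMap ℝ ℂ)) ≤ ‖M.map (algebraMap ℝ ℂ)‖₊ :=
    spectrum.spectralRadius_le_nnnorm _
  have h3 := ENNReal.toReal_mono (h2.trans_lt ENNReal.coe_lt_top).ne h1
  rw [ENNReal.coe_toReal, coe_nnnorm, Complex.norm_real] at h3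
  exact (le_abs_self μ).trans ((Real.norm_eq_abs μ) ▸ h3)

lemma aux_rayleigh {d : ℕ} (hd : 0 < d) {N : Matrix (Fin d) (Fin d) ℝ} (hN : N.IsHermitian) :
    ∃ μ ∈ spectrum ℝ N, ∀ v : Fin d → ℝ, v ⬝ᵥ (N *ᵥ v) ≤ μ * (v ⬝ᵥ v) := by
  haveI : Nonempty (Fin d) := ⟨⟨0, hd⟩⟩
  set μ := Finset.univ.sup' univ_nonempty hN.eigenvalues with hμdef
  obtain ⟨i0, -, hi0⟩ := Finset.exists_mem_eq_sup' univ_nonempty hN.eigenvalues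
  refine ⟨μ, ?_, ?_⟩
  · rw [hμdef, hi0]
    exact hN.eigenvalues_mem_spectrum_real i0
  · have hU : (hN.eigenvectorUnitary : Matrix (Fin d) (Fin d) ℝ)
        * star (hN.eigenvectorUnitary : Matrix (Fin d) (Fin d) ℝ) = 1 :=
      Matrix.mem_unitaryGroup_iff.mp hN.eigenvectorUnitary.2
    have hofReal : (RCLike.ofReal ∘ hN.eigenvalues : Fin d → ℝ) = hN.eigenvalues := by
      funext i; simp [RCLike.ofReal]
    have hsp := hN.spectral_theorem
    rw [hofReal, Unitary.conjStarAlgAut_apply] at hsp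
    have hconj : μ • (1 : Matrix (Fin d) (Fin d) ℝ)
        = (hN.eigenvectorUnitary : Matrix (Fin d) (Fin d) ℝ) * (μ • 1)
          * star (hN.eigenvectorUnitary : Matrix (Fin d) (Fin d) ℝ) := by
      rw [mul_smul_comm, mul_one, smul_mul_assoc, hU]
    have hdiag : (diagonal fun i => μ - hN.eigenvalues i)
        = μ • (1 : Matrix (Fin d) (Fin d) ℝ) - diagonal hN.eigenvalues := by
      ext i j
      by_cases h : i = j <;> simp [Matrix.diagonal, Matrix.one_apply, h]
    have key : μ • (1 : Matrix (Fin d) (Fin d) ℝ) - N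
        = (hN.eigenvectorUnitary : Matrix (Fin d) (Fin d) ℝ)
          * diagonal (fun i => μ - hN.eigenvalues i)
          * star (hN.eigenvectorUnitary : Matrix (Fin d) (Fin d) ℝ) := by
      rw [hdiag, mul_sub, sub_mul, ← hconj, ← hsp]
    have psd : (μ • (1 : Matrix (Fin d) (Fin d) ℝ) - N).PosSemidef := by
      rw [key]
      exact (Matrix.PosSemidef.diagonal fun i =>
        sub_nonneg.mpr (Finset.le_sup' hN.eigenvalues (mem_univ i))).mul_mul_conjTranspose_same _
    intro v
    have h0 := psd.dotProduct_mulVec_nonneg v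
    rw [star_trivial, Matrix.sub_mulVec, Matrix.smul_mulVec, Matrix.one_mulVec,
      dotProduct_sub, dotProduct_smul] at h0
    have : μ • (v ⬝ᵥ v) = μ * (v ⬝ᵥ v) := rfl
    linarith [h0]

/-- Rayleigh-quotient lower bound on `ρ(√(P∘P̄))` in terms of the transitions
inside a component `S`, where `R = diag(π̄)P` and `Q̄ = diag(π̄)P̄`. -/
theorem rho_lower_bound_component {d : ℕ} (P Pbar : Matrix (Fin d) (Fin d) ℝ)
    (π πbar : Fin d → ℝ)
    (hP : IsStochastic P) (hPbar : IsStochastic Pbar)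
    (hirr : IsIrreducibleMC P) (hirrbar : IsIrreducibleMC Pbar)
    (hstat : IsStationaryDist P π) (hstatbar : IsStationaryDist Pbar πbar)
    (hrev : IsReversible P π) (hrevbar : IsReversible Pbar πbar)
    (S : Finset (Fin d)) (hS : 0 < ∑ i ∈ S, πbar i)
    (ε : ℝ) (hε : ε ∈ Set.Ioo (0 : ℝ) 1)
    (hclose : ∀ i, |π i / πbar i - 1| ≤ ε / 2) :
    (1 - ε / 2) *
        ∑ i ∈ S, ∑ j ∈ S,
          Real.sqrt (πbar i * P i j / ∑ k ∈ S, πbar k)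
            * Real.sqrt (πbar i * Pbar i j / ∑ k ∈ S, πbar k)
      ≤ rho (sqrtm (Matrix.hadamard P Pbar)) := by
  obtain ⟨hε0, hε1⟩ := hε
  set a := ε / 2 with ha
  have ha0 : 0 < a := by simp only [ha]; linarith
  have ha1 : a < 1 := by simp only [ha]; linarith
  have h1a : 0 < 1 - a := by linarith
  have hπ := hstat.1
  have hπb := hstatbar.1
  have hSne : S.Nonempty := Finset.nonempty_of_sum_ne_zero (ne_of_gt hS)
  obtain ⟨i₀, hi₀⟩ := hSne
  have hd : 0 < d := i₀.pos
  set Z := ∑ k ∈ S, πbar k with hZdef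
  have hZ0 : (0 : ℝ) < Z := hS
  have hlow : ∀ i, (1 - a) * πbar i ≤ π i := by
    intro i
    have h := (abs_le.mp (hclose i)).1
    exact (le_div_iff₀ (hπb i)).mp (by linarith)
  have hup : ∀ i, π i ≤ (1 + a) * πbar i := by
    intro i
    have h := (abs_le.mp (hclose i)).2
    have := (div_le_iff₀ (hπb i)).mp (show π i / πbar i ≤ 1 + a by linarith)
    linarith
  set c : Fin d → ℝ := fun i => Real.sqrt (Real.sqrt (π i * πbar i)) with hc
  have hcpos : ∀ i, 0 < c i := fun i =>
    Real.sqrt_pos.mpr (Real.sqrt_pos.mpr (mul_pos (hπ i) (hπb i)))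
  have hcsq : ∀ i, c i ^ 2 = Real.sqrt (π i * πbar i) := fun i =>
    Real.sq_sqrt (Real.sqrt_nonneg _)
  set M := sqrtm (Matrix.hadamard P Pbar) with hM
  have hMe : ∀ i j, M i j = Real.sqrt (P i j * Pbar i j) := fun i j => rfl
  have hMnn : ∀ i j, 0 ≤ M i j := fun i j => Real.sqrt_nonneg _
  have hsym : ∀ i j, c i ^ 2 * M i j = c j ^ 2 * M j i := by
    intro i j
    rw [hcsq, hcsq, hMe, hMe,
      ← Real.sqrt_mul (le_of_lt (mul_pos (hπ i) (hπb i))),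
      ← Real.sqrt_mul (le_of_lt (mul_pos (hπ j) (hπb j)))]
    congr 1
    have h1 : π i * πbar i * (P i j * Pbar i j) = (π i * P i j) * (πbar i * Pbar i j) := by ring
    have h2 : π j * πbar j * (P j i * Pbar j i) = (π j * P j i) * (πbar j * Pbar j i) := by ring
    rw [h1, h2, hrev i j, hrevbar i j]
  set N : Matrix (Fin d) (Fin d) ℝ :=
    diagonal c * M * diagonal (fun i => (c i)⁻¹) with hNdef
  have hNe : ∀ i j, N i j = c i * M i j * (c j)⁻¹ := by
    intro i j
    rw [hNdef, Matrix.mul_diagonal, Matrix.diagonal_mul]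
  have hNherm : N.IsHermitian := by
    ext i j
    rw [Matrix.conjTranspose_apply, star_trivial, hNe, hNe]
    have h := hsym i j
    field_simp [(hcpos i).ne', (hcpos j).ne']
    nlinarith [hsym i j]
  have hCC' : diagonal c * diagonal (fun i => (c i)⁻¹) = 1 := by
    have h : (fun i => c i * (c i)⁻¹) = fun _ => (1 : ℝ) :=
      funext fun i => mul_inv_cancel₀ (hcpos i).ne'
    rw [Matrix.diagonal_mul_diagonal, h, Matrix.diagonal_one]
  obtain ⟨μ, hμspec, hμray⟩ := aux_rayleigh hd hNherm
  set A := ∑ i ∈ S, ∑ j ∈ S, c i ^ 2 * M i j with hA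
  set W := ∑ i ∈ S, c i ^ 2 with hW
  have hWpos : 0 < W := Finset.sum_pos (fun i _ => pow_pos (hcpos i) 2) ⟨i₀, hi₀⟩
  have hsum : ∀ f : Fin d → ℝ,
      (∑ i, (if i ∈ S then c i else 0) * f i) = ∑ i ∈ S, c i * f i := by
    intro f
    simp only [ite_mul, zero_mul]
    rw [Finset.sum_ite_mem, Finset.univ_inter]
  set v : Fin d → ℝ := fun i => if i ∈ S then c i else 0 with hv
  have hvv : v ⬝ᵥ v = W := by
    show (∑ i, (if i ∈ S then c i else 0) * v i) = W
    rw [hsum]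
    refine Finset.sum_congr rfl fun i hi => ?_
    simp only [hv, if_pos hi]; ring
  have hvNv : v ⬝ᵥ (N *ᵥ v) = A := by
    show (∑ i, (if i ∈ S then c i else 0) * (N *ᵥ v) i) = A
    rw [hsum]
    refine Finset.sum_congr rfl fun i hi => ?_
    have hinner : (N *ᵥ v) i = ∑ j ∈ S, N i j * c j := by
      show (∑ j, N i j * (if j ∈ S then c j else 0)) = _
      simp only [mul_ite, mul_zero]
      rw [Finset.sum_ite_mem, Finset.univ_inter]
    rw [hinner, Finset.mul_sum]
    refine Finset.sum_congr rfl fun j hj => ?_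
    rw [hNe]
    field_simp [(hcpos j).ne']
  have hray : A ≤ μ * W := by
    have h := hμray v
    rw [hvNv, hvv] at h
    exact h
  set B := ∑ i ∈ S, ∑ j ∈ S, Real.sqrt (πbar i * P i j) * Real.sqrt (πbar i * Pbar i j) with hB
  have hBnn : 0 ≤ B :=
    Finset.sum_nonneg fun i _ => Finset.sum_nonneg fun j _ =>
      mul_nonneg (Real.sqrt_nonneg _) (Real.sqrt_nonneg _)
  have hT : (∑ i ∈ S, ∑ j ∈ S,
      Real.sqrt (πbar i * P i j / Z) * Real.sqrt (πbar i * Pbar i j / Z)) = B / Z := by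
    rw [hB, Finset.sum_div]
    refine Finset.sum_congr rfl fun i hi => ?_
    rw [Finset.sum_div]
    refine Finset.sum_congr rfl fun j hj => ?_
    rw [Real.sqrt_div (mul_nonneg (hπb i).le (hP.1 i j)),
      Real.sqrt_div (mul_nonneg (hπb i).le (hPbar.1 i j)),
      div_mul_div_comm, Real.mul_self_sqrt hZ0.le]
  have key1 : Real.sqrt (1 - a) * B ≤ A := by
    rw [hB, hA, Finset.mul_sum]
    refine Finset.sum_le_sum fun i hi => ?_
    rw [Finset.mul_sum]
    refine Finset.sum_le_sum fun j hj => ?_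
    have hA' : c i ^ 2 * M i j = Real.sqrt ((π i * P i j) * (πbar i * Pbar i j)) := by
      rw [hcsq, hMe, ← Real.sqrt_mul (le_of_lt (mul_pos (hπ i) (hπb i)))]
      congr 1; ring
    have hB' : Real.sqrt (1 - a) *
        (Real.sqrt (πbar i * P i j) * Real.sqrt (πbar i * Pbar i j))
        = Real.sqrt ((1 - a) * (πbar i * P i j) * (πbar i * Pbar i j)) := by
      rw [Real.sqrt_mul (mul_nonneg h1a.le (mul_nonneg (hπb i).le (hP.1 i j))),
        Real.sqrt_mul h1a.le, mul_assoc]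
    rw [hA', hB']
    apply Real.sqrt_le_sqrt
    have h' : (1 - a) * (πbar i * P i j) ≤ π i * P i j := by
      have := mul_le_mul_of_nonneg_right (hlow i) (hP.1 i j)
      calc (1 - a) * (πbar i * P i j) = (1 - a) * πbar i * P i j := by ring
        _ ≤ π i * P i j := this
    exact mul_le_mul_of_nonneg_right h' (mul_nonneg (hπb i).le (hPbar.1 i j))
  have key2 : W ≤ Real.sqrt (1 + a) * Z := by
    rw [hW, hZdef, Finset.mul_sum]
    refine Finset.sum_le_sum fun i hi => ?_
    calc c i ^ 2 = Real.sqrt (π i * πbar i) := hcsq i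
      _ ≤ Real.sqrt ((1 + a) * πbar i * πbar i) := by
          apply Real.sqrt_le_sqrt
          have := mul_le_mul_of_nonneg_right (hup i) (hπb i).le
          linarith
      _ = Real.sqrt (1 + a) * πbar i := by
          rw [mul_assoc, Real.sqrt_mul (by linarith : (0:ℝ) ≤ 1 + a),
            Real.sqrt_mul_self (hπb i).le]
  have key3 : (1 - a) * Real.sqrt (1 + a) ≤ Real.sqrt (1 - a) := by
    have h4 : ((1 - a) * Real.sqrt (1 + a)) ^ 2 ≤ 1 - a := by
      rw [mul_pow, Real.sq_sqrt (by linarith : (0:ℝ) ≤ 1 + a)]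
      nlinarith [mul_nonneg h1a.le (sq_nonneg a)]
    exact (Real.le_sqrt (mul_nonneg h1a.le (Real.sqrt_nonneg _)) (by linarith)).mpr h4
  rw [hT]
  have hfrac_nn : 0 ≤ (1 - a) * (B / Z) :=
    mul_nonneg h1a.le (div_nonneg hBnn hZ0.le)
  have step : (1 - a) * (B / Z) ≤ μ := by
    have h5 : (1 - a) * (B / Z) * W ≤ (1 - a) * (B / Z) * (Real.sqrt (1 + a) * Z) :=
      mul_le_mul_of_nonneg_left key2 hfrac_nn
    have h6 : (1 - a) * (B / Z) * (Real.sqrt (1 + a) * Z) = (1 - a) * Real.sqrt (1 + a) * B := by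
      field_simp
    have h7 : (1 - a) * Real.sqrt (1 + a) * B ≤ Real.sqrt (1 - a) * B :=
      mul_le_mul_of_nonneg_right key3 hBnn
    have h8 : (1 - a) * (B / Z) * W ≤ μ * W := by
      rw [h6] at h5
      linarith
    exact le_of_mul_le_mul_right h8 hWpos
  have hμM : μ ∈ spectrum ℝ M := aux_mem_spectrum_of_conj hCC' (hNdef ▸ hμspec)
  exact step.trans (aux_le_rho hd hμM)
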